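/- Let K be a field, let n ≥ 3, and let Ω and Ψ be similarity classes of the n × n matrix algebra M(n,K) (orbits under conjugation by GL(n,K)). Assume that Ω and Ψ are nonscalar, i.e. they do not consist of a scalar multiple of the identity matrix. Then the set of traces of the product class, tr(ΩΨ) = { tr(ωψ) : ω ∈ Ω, ψ ∈ Ψ }, is all of K. -/

import Mathlib

open Matrix

section TraceHelpers

variable {K : Type*} [Field K] {n : ℕ}

private lemma trace_mul_stdBasis' (M : Matrix (Fin n) (Fin n) K) (i j : Fin n) (c : K) :
    (M * Matrix.single i j c).trace = M j i * c := by
  classical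
  rw [Matrix.trace, Finset.sum_eq_single j]
  · simp
  · intro k _ hk
    simp [Matrix.diag_apply, hk]
  · simp

private lemma exists_good_vector' (hn : 3 ≤ n) {M : Matrix (Fin n) (Fin n) K}
    (hM : ∀ c : K, M ≠ c • 1) : ∃ u : Fin n → K, ∀ c : K, M *ᵥ u ≠ c • u := by
  by_contra h
  push_neg at h
  choose c hc using h
  set z : Fin n := ⟨0, by omega⟩ with hz
  apply hM (c (Pi.single z 1))
  have key : ∀ j : Fin n, c (Pi.single j 1) = c (Pi.single z 1) := by
    intro j
    rcases eq_or_ne j z with rfl | hj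
    · rfl
    · have h1 := hc (Pi.single j 1 + Pi.single z 1)
      rw [Matrix.mulVec_add, hc (Pi.single j 1), hc (Pi.single z 1)] at h1
      have e1 := congrFun h1 j
      have e2 := congrFun h1 z
      simp only [Pi.add_apply, Pi.smul_apply, Pi.single_eq_same, smul_eq_mul, mul_one,
        Pi.single_eq_of_ne hj, Pi.single_eq_of_ne (Ne.symm hj), mul_zero, add_zero,
        zero_add, mul_add] at e1 e2
      rw [e1, e2]
  ext i j
  have h2 := congrFun (hc (Pi.single j 1)) i
  simp only [mulVec_single, mul_one, MulOpposite.op_one, one_smul, col_apply] at h2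
  rw [h2, key j, Matrix.smul_apply, Matrix.one_apply, Pi.smul_apply, smul_eq_mul, smul_eq_mul]
  by_cases hij : i = j
  · subst hij; simp
  · simp [hij, Pi.single_eq_of_ne (Ne.symm hij)]

private lemma li3' {u w v : Fin n → K} (hu : u ≠ 0) (hw : ∀ c : K, w ≠ c • u)
    (hv : v ∉ Submodule.span K {u, w}) : LinearIndependent K ![u, v, w] := by
  rw [Fintype.linearIndependent_iff]
  intro g hg
  rw [Fin.sum_univ_three] at hg
  simp only [Matrix.cons_val_zero, Matrix.cons_val_one, Matrix.head_cons,
    Matrix.cons_val_two, Matrix.tail_cons] at hg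
  have h1 : g 1 = 0 := by
    by_contra h1
    apply hv
    rw [Submodule.mem_span_pair]
    refine ⟨-((g 1)⁻¹ * g 0), -((g 1)⁻¹ * g 2), ?_⟩
    have h2 : g 1 • v = -(g 0 • u) + -(g 2 • w) := by
      linear_combination (norm := module) hg
    have h5 : v = (g 1)⁻¹ • (g 1 • v) := by rw [smul_smul, inv_mul_cancel₀ h1, one_smul]
    rw [h5, h2]
    module
  rw [h1, zero_smul, add_zero] at hg
  have h2 : g 2 = 0 := by
    by_contra h2
    apply hw (-((g 2)⁻¹ * g 0))
    have h3 : g 2 • w = -(g 0 • u) := eq_neg_of_add_eq_zero_right hg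
    have h5 : w = (g 2)⁻¹ • (g 2 • w) := by rw [smul_smul, inv_mul_cancel₀ h2, one_smul]
    rw [h5, h3]
    module
  rw [h2, zero_smul, add_zero, smul_eq_zero] at hg
  have h0 : g 0 = 0 := hg.resolve_right hu
  intro i; fin_cases i <;> assumption

private lemma li3'' {u w v : Fin n → K} (hu : u ≠ 0) (hw : ∀ c : K, w ≠ c • u)
    (hv : v ∉ Submodule.span K {u, w}) : LinearIndependent K ![u, w, v] := by
  have h2 := (li3' hu hw hv).comp (Equiv.swap (1 : Fin 3) 2) (Equiv.injective _)
  have : ![u, v, w] ∘ (Equiv.swap (1 : Fin 3) 2) = ![u, w, v] := by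
    funext x
    fin_cases x <;> simp [Equiv.swap_apply_def]
  rwa [this] at h2

private lemma exists_outside' (hn : 3 ≤ n) (u w : Fin n → K) :
    ∃ v, v ∉ Submodule.span K {u, w} := by
  classical
  have hlt : Submodule.span K {u, w} < ⊤ := by
    apply span_lt_top_of_card_lt_finrank
    have h1 : ({u, w} : Set (Fin n → K)).toFinset.card ≤ 2 := by
      rw [Set.toFinset_insert, Set.toFinset_singleton]
      exact (Finset.card_insert_le _ _).trans (by simp)
    have hr : Module.finrank K (Fin n → K) = n := Module.finrank_fin_fun K
    omega
  obtain ⟨v, -, hv⟩ := SetLike.exists_of_lt hlt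
  exact ⟨v, hv⟩

private lemma exists_unit_cols' (hn : 3 ≤ n) (f : Fin 3 → (Fin n → K))
    (hf : LinearIndependent K f) :
    ∃ P : (Matrix (Fin n) (Fin n) K)ˣ,
      ∀ i : Fin 3, (P : Matrix (Fin n) (Fin n) K) *ᵥ Pi.single (Fin.castLE hn i) 1 = f i := by
  classical
  have hs : LinearIndepOn K id (Set.range f) := (linearIndepOn_id_range_iff hf.injective).mpr hf
  let b := Module.Basis.extend hs
  haveI : Fintype (hs.extend (Set.subset_univ (Set.range f))) :=
    FiniteDimensional.fintypeBasisIndex b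
  have hcard : Fintype.card (hs.extend (Set.subset_univ (Set.range f))) = n := by
    rw [← Module.finrank_eq_card_basis b, Module.finrank_fin_fun]
  let e0 : (hs.extend (Set.subset_univ (Set.range f))) ≃ Fin n := Fintype.equivFinOfCardEq hcard
  have hmem : ∀ i : Fin 3, f i ∈ hs.extend (Set.subset_univ (Set.range f)) :=
    fun i => hs.subset_extend _ ⟨i, rfl⟩
  let g : Fin 3 → Fin n := fun i => e0 ⟨f i, hmem i⟩
  have hg : Function.Injective g := by
    intro a b hab
    have := e0.injective hab
    exact hf.injective (Subtype.ext_iff.mp this)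
  let t : Fin 3 → Fin n := Fin.castLE hn
  have ht : Function.Injective t := Fin.castLE_injective hn
  let eS : {x // x ∈ Set.range g} ≃ {x // x ∈ Set.range t} :=
    (Equiv.ofInjective g hg).symm.trans (Equiv.ofInjective t ht)
  let σ : Equiv.Perm (Fin n) := eS.extendSubtype
  have hσ : ∀ i, σ (g i) = t i := by
    intro i
    rw [Equiv.extendSubtype_apply_of_mem eS (g i) ⟨i, rfl⟩]
    show ((Equiv.ofInjective t ht) ((Equiv.ofInjective g hg).symm ⟨g i, _⟩) : Fin n) = t i
    rw [Equiv.ofInjective_symm_apply]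
    rfl
  let e : (hs.extend (Set.subset_univ (Set.range f))) ≃ Fin n := e0.trans σ
  let b' := b.reindex e
  have hb' : ∀ i : Fin 3, b' (Fin.castLE hn i) = f i := by
    intro i
    rw [Module.Basis.reindex_apply]
    have h6 : e.symm (Fin.castLE hn i) = ⟨f i, hmem i⟩ := by
      rw [Equiv.symm_apply_eq]
      exact (hσ i).symm
    rw [h6]
    exact Module.Basis.extend_apply_self hs _
  let k := Pi.basisFun K (Fin n)
  haveI : Invertible (k.toMatrix b') := k.invertibleToMatrix b'
  refine ⟨unitOfInvertible (k.toMatrix b'), fun i => ?_⟩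
  have hcol : ∀ j, (k.toMatrix b') *ᵥ Pi.single j 1 = b' j := by
    intro j
    funext r
    simp only [k, mulVec_single, mul_one, MulOpposite.op_one, one_smul, col_apply, Module.Basis.toMatrix_apply, Pi.basisFun_repr]
  show (k.toMatrix ⇑b') *ᵥ _ = _
  rw [hcol, hb']

private lemma conj_mem' {A : Matrix (Fin n) (Fin n) K} {S : Set (Matrix (Fin n) (Fin n) K)}
    (hS : S = {B | ∃ g : (Matrix (Fin n) (Fin n) K)ˣ,
        (g : Matrix (Fin n) (Fin n) K) * A * (↑g⁻¹ : Matrix (Fin n) (Fin n) K) = B})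
    {X : Matrix (Fin n) (Fin n) K} (hX : X ∈ S) (g : (Matrix (Fin n) (Fin n) K)ˣ) :
    (g : Matrix (Fin n) (Fin n) K) * X * (↑g⁻¹ : Matrix (Fin n) (Fin n) K) ∈ S := by
  subst hS
  obtain ⟨h, rfl⟩ := hX
  exact ⟨g * h, by simp [Units.val_mul, _root_.mul_inv_rev, mul_assoc]⟩

private lemma inv_mulVec' {P : (Matrix (Fin n) (Fin n) K)ˣ} {x y : Fin n → K}
    (h : (P : Matrix (Fin n) (Fin n) K) *ᵥ x = y) :
    (↑P⁻¹ : Matrix (Fin n) (Fin n) K) *ᵥ y = x := by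
  rw [← h, mulVec_mulVec, ← Units.val_mul, inv_mul_cancel, Units.val_one, one_mulVec]

private lemma unit_pair' {X : Matrix (Fin n) (Fin n) K} (hX : X * X = 0) :
    (1 + X) * (1 - X) = 1 ∧ (1 - X) * (1 + X) = 1 := by
  constructor
  · rw [mul_sub, mul_one, add_mul, one_mul, hX, add_zero, add_sub_cancel_right]
  · rw [sub_mul, one_mul, mul_add, mul_one, hX, add_zero, add_sub_cancel_right]

end TraceHelpers

/-- **Theorem 1.** Let `K` be a field, `n ≥ 3`, and let `Ω`, `Ψ` be similarity
classes of `M(n,K)` (orbits under conjugation by `GL(n,K)`).  If `Ω` and `Ψ` are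
nonscalar, then the set of traces of products `ωψ` (`ω ∈ Ω`, `ψ ∈ Ψ`) is all of `K`. -/
theorem trace_product_similarity_classes_eq_univ
    {K : Type*} [Field K] {n : ℕ} (hn : 3 ≤ n)
    (Ω Ψ : Set (Matrix (Fin n) (Fin n) K))
    (hΩclass : ∃ A : Matrix (Fin n) (Fin n) K,
      Ω = {B | ∃ g : (Matrix (Fin n) (Fin n) K)ˣ, (g : Matrix (Fin n) (Fin n) K) * A * (↑g⁻¹ : Matrix (Fin n) (Fin n) K) = B})
    (hΨclass : ∃ A : Matrix (Fin n) (Fin n) K,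
      Ψ = {B | ∃ g : (Matrix (Fin n) (Fin n) K)ˣ, (g : Matrix (Fin n) (Fin n) K) * A * (↑g⁻¹ : Matrix (Fin n) (Fin n) K) = B})
    (hΩns : ∀ ω ∈ Ω, ∀ c : K, ω ≠ c • (1 : Matrix (Fin n) (Fin n) K))
    (hΨns : ∀ ψ ∈ Ψ, ∀ c : K, ψ ≠ c • (1 : Matrix (Fin n) (Fin n) K)) :
    {τ : K | ∃ ω ∈ Ω, ∃ ψ ∈ Ψ, (ω * ψ).trace = τ} = Set.univ := by
  classical
  obtain ⟨A₀, hΩ⟩ := hΩclass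
  obtain ⟨B₀, hΨ⟩ := hΨclass
  have hA₀ : A₀ ∈ Ω := by rw [hΩ]; exact ⟨1, by simp⟩
  have hB₀ : B₀ ∈ Ψ := by rw [hΨ]; exact ⟨1, by simp⟩
  set i0 : Fin n := ⟨0, by omega⟩ with hi0
  set i1 : Fin n := ⟨1, by omega⟩ with hi1
  set i2 : Fin n := ⟨2, by omega⟩ with hi2
  have h10 : i1 ≠ i0 := by simp [hi0, hi1, Fin.ext_iff]
  have h20 : i2 ≠ i0 := by simp [hi0, hi2, Fin.ext_iff]
  have h21 : i2 ≠ i1 := by simp [hi1, hi2, Fin.ext_iff]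
  have hc0 : Fin.castLE hn (0 : Fin 3) = i0 := rfl
  have hc1 : Fin.castLE hn (1 : Fin 3) = i1 := rfl
  have hc2 : Fin.castLE hn (2 : Fin 3) = i2 := rfl
  -- A side normal form
  obtain ⟨u, hu⟩ := exists_good_vector' hn (hΩns A₀ hA₀)
  have hu0 : u ≠ 0 := fun h => hu 0 (by simp [h])
  obtain ⟨v, hv⟩ := exists_outside' hn u (A₀ *ᵥ u)
  obtain ⟨P, hP⟩ := exists_unit_cols' hn ![u, A₀ *ᵥ u, v] (li3'' hu0 hu hv)
  set A : Matrix (Fin n) (Fin n) K := (↑(P⁻¹) : Matrix (Fin n) (Fin n) K) * A₀ * (↑P : Matrix (Fin n) (Fin n) K) with hA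
  have hAΩ : A ∈ Ω := by
    have := conj_mem' hΩ hA₀ P⁻¹
    rw [hA]
    rwa [inv_inv] at this
  have hP0 : (↑P : Matrix (Fin n) (Fin n) K) *ᵥ Pi.single i0 1 = u := by
    have := hP 0; rwa [hc0] at this
  have hP1 : (↑P : Matrix (Fin n) (Fin n) K) *ᵥ Pi.single i1 1 = A₀ *ᵥ u := by
    have := hP 1; rwa [hc1] at this
  have hAcol : A *ᵥ Pi.single i0 1 = Pi.single i1 1 := by
    rw [hA, ← mulVec_mulVec, ← mulVec_mulVec, hP0]
    exact inv_mulVec' hP1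
  have hAe : ∀ r, A r i0 = (Pi.single i1 1 : Fin n → K) r := by
    intro r
    have := congrFun hAcol r
    simpa only [mulVec_single, mul_one, MulOpposite.op_one, one_smul, col_apply] using this
  -- B side
  obtain ⟨u', hu'⟩ := exists_good_vector' hn (hΨns B₀ hB₀)
  have hu0' : u' ≠ 0 := fun h => hu' 0 (by simp [h])
  obtain ⟨v', hv'⟩ := exists_outside' hn u' (B₀ *ᵥ u')
  obtain ⟨Q0, hQ0⟩ := exists_unit_cols' hn ![u', v', B₀ *ᵥ u'] (li3' hu0' hu' hv')
  have hq0 : (↑Q0 : Matrix (Fin n) (Fin n) K) *ᵥ Pi.single i0 1 = u' := by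
    have := hQ0 0; rwa [hc0] at this
  have hq1 : (↑Q0 : Matrix (Fin n) (Fin n) K) *ᵥ Pi.single i1 1 = v' := by
    have := hQ0 1; rwa [hc1] at this
  have hq2 : (↑Q0 : Matrix (Fin n) (Fin n) K) *ᵥ Pi.single i2 1 = B₀ *ᵥ u' := by
    have := hQ0 2; rwa [hc2] at this
  set E01 : Matrix (Fin n) (Fin n) K := Matrix.single i0 i1 1 with hE01def
  have hE01sq : E01 * E01 = 0 := Matrix.single_mul_single_of_ne _ _ _ _ h10 _
  set T : (Matrix (Fin n) (Fin n) K)ˣ :=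
    ⟨1 + E01, 1 - E01, (unit_pair' hE01sq).1, (unit_pair' hE01sq).2⟩ with hT
  have hTval : (↑T : Matrix (Fin n) (Fin n) K) = 1 + E01 := rfl
  have hTinv : (↑T⁻¹ : Matrix (Fin n) (Fin n) K) = 1 - E01 := rfl
  have hE01e0 : E01 *ᵥ Pi.single i0 (1:K) = 0 := by
    funext r
    rw [hE01def, single_mulVec]
    rcases eq_or_ne r i0 with rfl | hr
    · simp [Pi.single_eq_of_ne h10]
    · simp [Function.update_of_ne hr]
  have hE01e2 : E01 *ᵥ Pi.single i2 (1:K) = 0 := by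
    funext r
    rw [hE01def, single_mulVec]
    rcases eq_or_ne r i0 with rfl | hr
    · simp [Pi.single_eq_of_ne (Ne.symm h21)]
    · simp [Function.update_of_ne hr]
  have hE01e1 : E01 *ᵥ Pi.single i1 (1:K) = Pi.single i0 (1:K) := by
    funext r
    rw [hE01def, single_mulVec]
    rcases eq_or_ne r i0 with rfl | hr
    · simp
    · simp [Function.update_of_ne hr, Pi.single_eq_of_ne hr]
  set Q : (Matrix (Fin n) (Fin n) K)ˣ := Q0 * T with hQ
  set B₁ : Matrix (Fin n) (Fin n) K := (↑(Q0⁻¹) : Matrix (Fin n) (Fin n) K) * B₀ * (↑Q0 : Matrix (Fin n) (Fin n) K) with hB₁def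
  set B₂ : Matrix (Fin n) (Fin n) K := (↑(Q⁻¹) : Matrix (Fin n) (Fin n) K) * B₀ * (↑Q : Matrix (Fin n) (Fin n) K) with hB₂def
  have hB₁Ψ : B₁ ∈ Ψ := by
    have := conj_mem' hΨ hB₀ Q0⁻¹
    rw [hB₁def]
    rwa [inv_inv] at this
  have hB₂Ψ : B₂ ∈ Ψ := by
    have := conj_mem' hΨ hB₀ Q⁻¹
    rw [hB₂def]
    rwa [inv_inv] at this
  have hQe0 : (↑Q : Matrix (Fin n) (Fin n) K) *ᵥ Pi.single i0 1 = u' := by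
    rw [hQ, Units.val_mul, ← mulVec_mulVec, hTval, add_mulVec, one_mulVec, hE01e0, add_zero, hq0]
  have hQe2 : (↑Q : Matrix (Fin n) (Fin n) K) *ᵥ Pi.single i2 1 = B₀ *ᵥ u' := by
    rw [hQ, Units.val_mul, ← mulVec_mulVec, hTval, add_mulVec, one_mulVec, hE01e2, add_zero, hq2]
  have hQe1 : (↑Q : Matrix (Fin n) (Fin n) K) *ᵥ Pi.single i1 1 = v' + u' := by
    rw [hQ, Units.val_mul, ← mulVec_mulVec, hTval, add_mulVec, one_mulVec, hE01e1,
      mulVec_add, hq1, hq0]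
  have hB₁0 : B₁ *ᵥ Pi.single i0 1 = Pi.single i2 1 := by
    rw [hB₁def, ← mulVec_mulVec, ← mulVec_mulVec, hq0]
    exact inv_mulVec' hq2
  have hB₂0 : B₂ *ᵥ Pi.single i0 1 = Pi.single i2 1 := by
    rw [hB₂def, ← mulVec_mulVec, ← mulVec_mulVec, hQe0]
    exact inv_mulVec' hQe2
  set z : Fin n → K := B₁ *ᵥ Pi.single i1 1 with hzdef
  have hB₂1 : B₂ *ᵥ Pi.single i1 1 = z + Pi.single i2 1 - E01 *ᵥ (z + Pi.single i2 1) := by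
    rw [hB₂def, ← mulVec_mulVec, ← mulVec_mulVec, hQe1]
    have hQinv : (↑Q⁻¹ : Matrix (Fin n) (Fin n) K) = (↑T⁻¹ : Matrix (Fin n) (Fin n) K) *
        (↑Q0⁻¹ : Matrix (Fin n) (Fin n) K) := by
      rw [hQ, _root_.mul_inv_rev, Units.val_mul]
    rw [hQinv, ← mulVec_mulVec]
    have : (↑Q0⁻¹ : Matrix (Fin n) (Fin n) K) *ᵥ (B₀ *ᵥ (v' + u')) = z + Pi.single i2 1 := by
      rw [mulVec_add, mulVec_add, hzdef, hB₁def, ← mulVec_mulVec, ← mulVec_mulVec, hq1]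
      congr 1
      exact inv_mulVec' hq2
    rw [this, hTinv, sub_mulVec, one_mulVec]
  -- entries
  have hB₁e : ∀ r, B₁ r i0 = (Pi.single i2 1 : Fin n → K) r := by
    intro r
    have := congrFun hB₁0 r
    simpa only [mulVec_single, mul_one, MulOpposite.op_one, one_smul, col_apply] using this
  have hB₂e : ∀ r, B₂ r i0 = (Pi.single i2 1 : Fin n → K) r := by
    intro r
    have := congrFun hB₂0 r
    simpa only [mulVec_single, mul_one, MulOpposite.op_one, one_smul, col_apply] using this
  have hB₁21 : B₁ i2 i1 = z i2 := by
    have := congrFun hzdef i2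
    simp only [mulVec_single, mul_one, MulOpposite.op_one, one_smul, col_apply] at this
    exact this.symm
  have hB₂21 : B₂ i2 i1 = z i2 + 1 := by
    have := congrFun hB₂1 i2
    simp only [mulVec_single, mul_one, MulOpposite.op_one, one_smul, col_apply] at this
    rw [this]
    have hE : (E01 *ᵥ (z + Pi.single i2 1)) i2 = 0 := by
      rw [hE01def, single_mulVec, Function.update_of_ne h20]
      rfl
    simp [hE, Pi.single_eq_same]
  have hABeq : (A * B₂) i2 i0 = (A * B₁) i2 i0 := by
    rw [mul_apply, mul_apply]
    apply Finset.sum_congr rfl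
    intro k _
    rw [hB₁e k, hB₂e k]
  -- choose B' with nonzero μ
  have key : ∃ B', B' ∈ Ψ ∧ B' i2 i1 - (A * B') i2 i0 ≠ 0 := by
    rcases eq_or_ne (B₁ i2 i1 - (A * B₁) i2 i0) 0 with h | h
    · refine ⟨B₂, hB₂Ψ, ?_⟩
      rw [hB₂21, hABeq]
      rw [hB₁21] at h
      intro hcontra
      rw [add_sub_right_comm, h, zero_add] at hcontra
      exact one_ne_zero hcontra
    · exact ⟨B₁, hB₁Ψ, h⟩
  obtain ⟨B', hB'Ψ, hμ⟩ := key
  set μ : K := B' i2 i1 - (A * B') i2 i0 with hμdef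
  -- final construction
  rw [Set.eq_univ_iff_forall]
  intro τ
  set t : K := (τ - (A * B').trace) / μ with ht
  set X : Matrix (Fin n) (Fin n) K := Matrix.single i0 i2 t with hXdef
  have hXX : X * X = 0 := Matrix.single_mul_single_of_ne _ _ _ _ h20 _
  set U : (Matrix (Fin n) (Fin n) K)ˣ :=
    ⟨1 + X, 1 - X, (unit_pair' hXX).1, (unit_pair' hXX).2⟩ with hU
  have hUval : (↑U : Matrix (Fin n) (Fin n) K) = 1 + X := rfl
  have hUinv : (↑U⁻¹ : Matrix (Fin n) (Fin n) K) = 1 - X := rfl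
  refine ⟨A, hAΩ, (↑U : Matrix (Fin n) (Fin n) K) * B' * (↑(U⁻¹) : Matrix (Fin n) (Fin n) K), conj_mem' hΨ hB'Ψ U, ?_⟩
  have hAX : A * X = Matrix.single i1 i2 t := by
    ext a b
    rcases eq_or_ne b i2 with rfl | hb
    · rw [hXdef, mul_single_apply_same, hAe a]
      rcases eq_or_ne a i1 with rfl | ha
      · rw [Pi.single_eq_same, one_mul, single_apply_same]
      · rw [Pi.single_eq_of_ne ha, zero_mul,
          single_apply_of_row_ne (Ne.symm ha)]
    · simp [hXdef, hb, Ne.symm hb]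
  have expand : A * ((1 + X) * B' * (1 - X)) =
      A * B' + A * X * B' - A * B' * X - A * X * B' * X := by
    noncomm_ring
  rw [hUval, hUinv, expand, trace_sub, trace_sub, trace_add]
  have t1 : (A * X * B').trace = B' i2 i1 * t := by
    rw [hAX, trace_mul_comm, trace_mul_stdBasis']
  have t2 : (A * B' * X).trace = (A * B') i2 i0 * t := by
    rw [hXdef, trace_mul_stdBasis']
  have t3 : (A * X * B' * X).trace = 0 := by
    rw [hAX, hXdef, trace_mul_stdBasis', single_mul_apply_of_ne _ _ _ _ _ h21,
      zero_mul]
  rw [t1, t2, t3, sub_zero, ht]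
  have hμ' : μ ≠ 0 := hμ
  field_simp
  ring
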